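/- For the objective function H(P) = (2/(N(N−1))) Σ_{i≠j} log|P_i − P_j|⁻¹ + (1/N) Σ_i V(P_i) with V(x) = x², H is bounded below on the set of N-tuples of distinct real numbers and attains its infimum; moreover any minimizer P* has pairwise distinct coordinates. -/

import Mathlib

open Finset

/-- The Fekete-point objective function with external field `V(x) = x²`:
`H(P) = (2/(N(N-1))) Σ_{i ≠ j} log |P_i - P_j|⁻¹ + (1/N) Σ_i P_i²`. -/
noncomputable def feketeH (N : ℕ) (P : Fin N → ℝ) : ℝ :=
  (2 / ((N : ℝ) * ((N : ℝ) - 1))) *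
      ∑ i, ∑ j, (if i ≠ j then Real.log (|P i - P j|⁻¹) else 0) +
    (1 / (N : ℝ)) * ∑ i, (P i) ^ 2

/-- Pointwise bound: `log |x-y|⁻¹ ≥ -(x²+y²)/8 - 3`. -/
lemma feketeAux_key (x y : ℝ) : -(x^2+y^2)/8 - 3 ≤ Real.log (|x-y|⁻¹) := by
  by_cases h : x = y
  · simp [h]; nlinarith [sq_nonneg x, sq_nonneg y]
  · have hpos : 0 < |x - y| := abs_pos.mpr (sub_ne_zero.mpr h)
    rw [Real.log_inv]
    have h1 : Real.log |x - y| ≤ |x - y| - 1 := Real.log_le_sub_one_of_pos hpos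
    have h2 : |x - y| ≤ |x| + |y| := abs_sub x y
    nlinarith [sq_nonneg (|x| - 4), sq_nonneg (|y| - 4), sq_abs x, sq_abs y]

/-- Value of the off-diagonal sum of the quadratic lower bounds. -/
lemma feketeAux_Bsum {N : ℕ} (P : Fin N → ℝ) :
    ∑ i, ∑ j, (if i ≠ j then (-(P i^2 + P j^2)/8 - 3) else 0)
      = -(((N:ℝ)-1)/4) * (∑ i, P i ^ 2) - 3*(N:ℝ)*((N:ℝ)-1) := by
  set S := ∑ i, P i ^ 2 with hS
  have h2 : ∀ i : Fin N, ∑ j, (-(P i^2 + P j^2)/8 - 3)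
      = -((N:ℝ) * P i^2 + S)/8 - 3*(N:ℝ) := by
    intro i
    have : ∀ j : Fin N, (-(P i^2 + P j^2)/8 - 3)
        = P i^2 * (-1/8) - 3 + P j ^2 * (-1/8) := by intro j; ring
    rw [Finset.sum_congr rfl fun j _ => this j, Finset.sum_add_distrib, ← Finset.sum_mul,
      Finset.sum_const, Finset.card_univ, ← hS]
    simp
    ring
  have h1 : ∀ i : Fin N, ∑ j, (if i ≠ j then (-(P i^2 + P j^2)/8 - 3) else 0)
      = (-((N:ℝ) * P i^2 + S)/8 - 3*(N:ℝ)) - (-(P i^2 + P i^2)/8 - 3) := by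
    intro i
    have key : ∀ j : Fin N, (if i ≠ j then (-(P i^2 + P j^2)/8 - 3) else 0)
        = (-(P i^2 + P j^2)/8 - 3) - (if i = j then (-(P i^2 + P j^2)/8 - 3) else 0) := by
      intro j; by_cases h : i = j <;> simp [h]
    rw [Finset.sum_congr rfl fun j _ => key j, Finset.sum_sub_distrib,
      Finset.sum_ite_eq Finset.univ i, h2 i]
    simp
  rw [Finset.sum_congr rfl fun i _ => h1 i]
  have h3 : ∀ i : Fin N, (-((N:ℝ) * P i^2 + S)/8 - 3*(N:ℝ)) - (-(P i^2 + P i^2)/8 - 3)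
      = P i ^2 * (-((N:ℝ)-2)/8) + (- S/8 - 3*(N:ℝ) + 3) := by intro i; ring
  rw [Finset.sum_congr rfl fun i _ => h3 i, Finset.sum_add_distrib, ← Finset.sum_mul,
    Finset.sum_const, Finset.card_univ, ← hS]
  simp
  ring

/-- Lower bound on the logarithmic double sum. -/
lemma feketeAux_T_ge {N : ℕ} (P : Fin N → ℝ) :
    -(((N:ℝ)-1)/4) * (∑ i, P i ^ 2) - 3*(N:ℝ)*((N:ℝ)-1)
      ≤ ∑ i, ∑ j, (if i ≠ j then Real.log (|P i - P j|⁻¹) else 0) := by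
  rw [← feketeAux_Bsum P]
  refine Finset.sum_le_sum fun i _ => Finset.sum_le_sum fun j _ => ?_
  by_cases h : i = j
  · simp [h]
  · simp only [h, ne_eq, not_false_iff, if_true]
    exact feketeAux_key (P i) (P j)

/-- Improved lower bound when a pair of points is `δ`-close. -/
lemma feketeAux_T_ge_close {N : ℕ} (P : Fin N → ℝ) {a b : Fin N} (hab : a ≠ b)
    {δ : ℝ} (hδ : 0 < δ) (hpa : P a ≠ P b) (hclose : |P a - P b| ≤ δ) :
    Real.log δ⁻¹ + (-(((N:ℝ)-1)/4) * (∑ i, P i ^ 2) - 3*(N:ℝ)*((N:ℝ)-1))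
      ≤ ∑ i, ∑ j, (if i ≠ j then Real.log (|P i - P j|⁻¹) else 0) := by
  classical
  set F : Fin N × Fin N → ℝ := fun p => if p.1 ≠ p.2 then Real.log (|P p.1 - P p.2|⁻¹) else 0
    with hF
  set G : Fin N × Fin N → ℝ := fun p => if p.1 ≠ p.2 then (-(P p.1^2 + P p.2^2)/8 - 3) else 0
    with hG
  have hT : ∑ i, ∑ j, (if i ≠ j then Real.log (|P i - P j|⁻¹) else 0)
      = ∑ p ∈ Finset.univ ×ˢ Finset.univ, F p := by
    rw [Finset.sum_product]
  have hGsum : ∑ p ∈ Finset.univ ×ˢ Finset.univ, G p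
      = -(((N:ℝ)-1)/4) * (∑ i, P i ^ 2) - 3*(N:ℝ)*((N:ℝ)-1) := by
    rw [Finset.sum_product]; exact feketeAux_Bsum P
  have hmem : (a, b) ∈ Finset.univ ×ˢ (Finset.univ : Finset (Fin N)) := by simp
  rw [hT, ← Finset.add_sum_erase _ F hmem]
  have h1 : Real.log δ⁻¹ ≤ F (a, b) := by
    have habs : 0 < |P a - P b| := abs_pos.mpr (sub_ne_zero.mpr hpa)
    have : δ⁻¹ ≤ |P a - P b|⁻¹ := inv_anti₀ habs hclose
    simp only [hF, hab, ne_eq, not_false_iff, if_true]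
    exact Real.log_le_log (inv_pos.mpr hδ) this
  have h2 : ∑ p ∈ (Finset.univ ×ˢ Finset.univ).erase (a, b), G p
      ≤ ∑ p ∈ (Finset.univ ×ˢ Finset.univ).erase (a, b), F p := by
    refine Finset.sum_le_sum fun p _ => ?_
    by_cases h : p.1 = p.2
    · simp [hF, hG, h]
    · simp only [hF, hG, h, ne_eq, not_false_iff, if_true]
      exact feketeAux_key (P p.1) (P p.2)
  have h3 : ∑ p ∈ Finset.univ ×ˢ Finset.univ, G p
      ≤ ∑ p ∈ (Finset.univ ×ˢ Finset.univ).erase (a, b), G p := by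
    rw [← Finset.add_sum_erase _ G hmem]
    have : G (a, b) ≤ 0 := by
      simp only [hG, hab, ne_eq, not_false_iff, if_true]
      nlinarith [sq_nonneg (P a), sq_nonneg (P b)]
    linarith
  rw [← hGsum]
  linarith

section feketeAux
variable {N : ℕ} (hN : 2 ≤ N)
include hN

lemma feketeAux_hden : 0 < (N:ℝ) * ((N:ℝ) - 1) := by
  have : (2:ℝ) ≤ (N:ℝ) := by exact_mod_cast hN
  nlinarith

/-- Coercive lower bound for `feketeH`. -/
lemma feketeAux_ge (P : Fin N → ℝ) :
    (1/(2*(N:ℝ))) * (∑ i, P i ^ 2) - 6 ≤ feketeH N P := by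
  have hd := feketeAux_hden hN
  have hc : 0 < 2 / ((N:ℝ) * ((N:ℝ) - 1)) := by positivity
  have h := feketeAux_T_ge P
  have h2 := mul_le_mul_of_nonneg_left h hc.le
  have heq : (2 / ((N:ℝ) * ((N:ℝ) - 1))) *
      (-(((N:ℝ)-1)/4) * (∑ i, P i ^ 2) - 3*(N:ℝ)*((N:ℝ)-1))
      = -(1/(2*(N:ℝ))) * (∑ i, P i ^ 2) - 6 := by
    have hN1 : (N:ℝ) - 1 ≠ 0 := by have : (2:ℝ) ≤ (N:ℝ) := (by exact_mod_cast hN); linarith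
    field_simp [hN1]; ring
  rw [heq] at h2
  unfold feketeH
  have hS : 0 ≤ ∑ i, P i ^ 2 := Finset.sum_nonneg fun i _ => sq_nonneg _
  have hn : (2:ℝ) ≤ (N:ℝ) := by exact_mod_cast hN
  have : -(1/(2*(N:ℝ))) * (∑ i, P i ^ 2) + (1 / (N:ℝ)) * ∑ i, P i ^ 2
      = (1/(2*(N:ℝ))) * (∑ i, P i ^ 2) := by field_simp; ring
  have hS2 : 0 ≤ (1/(2*(N:ℝ))) * ∑ i, P i ^ 2 := by positivity
  linarith [h2, this, hS2]

/-- Lower bound blowing up as two points come `δ`-close. -/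
lemma feketeAux_ge_close (P : Fin N → ℝ) {a b : Fin N} (hab : a ≠ b)
    {δ : ℝ} (hδ : 0 < δ) (hpa : P a ≠ P b) (hclose : |P a - P b| ≤ δ) :
    (2 / ((N:ℝ) * ((N:ℝ) - 1))) * Real.log δ⁻¹ - 6 ≤ feketeH N P := by
  have hd := feketeAux_hden hN
  have hc : 0 < 2 / ((N:ℝ) * ((N:ℝ) - 1)) := by positivity
  have h := feketeAux_T_ge_close P hab hδ hpa hclose
  have h2 := mul_le_mul_of_nonneg_left h hc.le
  have heq : (2 / ((N:ℝ) * ((N:ℝ) - 1))) *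
      (Real.log δ⁻¹ + (-(((N:ℝ)-1)/4) * (∑ i, P i ^ 2) - 3*(N:ℝ)*((N:ℝ)-1)))
      = (2 / ((N:ℝ) * ((N:ℝ) - 1))) * Real.log δ⁻¹
        + (-(1/(2*(N:ℝ))) * (∑ i, P i ^ 2) - 6) := by
    have hN1 : (N:ℝ) - 1 ≠ 0 := by have : (2:ℝ) ≤ (N:ℝ) := (by exact_mod_cast hN); linarith
    field_simp [hN1]; ring
  rw [heq] at h2
  unfold feketeH
  have hS : 0 ≤ ∑ i, P i ^ 2 := Finset.sum_nonneg fun i _ => sq_nonneg _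
  have hn : (2:ℝ) ≤ (N:ℝ) := by exact_mod_cast hN
  have : -(1/(2*(N:ℝ))) * (∑ i, P i ^ 2) + (1 / (N:ℝ)) * ∑ i, P i ^ 2
      = (1/(2*(N:ℝ))) * (∑ i, P i ^ 2) := by field_simp; ring
  have hS2 : 0 ≤ (1/(2*(N:ℝ))) * ∑ i, P i ^ 2 := by positivity
  linarith [h2, this, hS2]

end feketeAux

/-- `feketeH` is continuous on the set of tuples with pairwise distinct coordinates. -/
lemma feketeAux_contOn (N : ℕ) :
    ContinuousOn (feketeH N) {P : Fin N → ℝ | ∀ i j : Fin N, i ≠ j → P i ≠ P j} := by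
  unfold feketeH
  apply ContinuousOn.add
  · apply ContinuousOn.mul continuousOn_const
    apply continuousOn_finset_sum
    intro i _
    apply continuousOn_finset_sum
    intro j _
    by_cases h : i = j
    · simp [h]; exact continuousOn_const
    · simp only [h, ne_eq, not_false_iff, if_true]
      have heq : (fun P : Fin N → ℝ => Real.log (|P i - P j|⁻¹))
          = fun P => -Real.log (|P i - P j|) := by
        funext P; rw [Real.log_inv]
      rw [heq]
      apply ContinuousOn.neg
      apply ContinuousOn.log
      · exact (((continuous_apply i).sub (continuous_apply j)).abs).continuousOn
      · intro P hP
        exact abs_ne_zero.mpr (sub_ne_zero.mpr (hP i j h))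
  · exact continuousOn_const.mul (continuousOn_finset_sum _ fun i _ =>
      ((continuous_apply i).pow 2).continuousOn)

/-- For `V(x) = x²` and `N ≥ 2`, the objective `H` is bounded below on the set of
`N`-tuples with pairwise distinct entries and attains its infimum there; a minimizer
`P*` has pairwise distinct coordinates. -/
theorem feketeH_bddBelow_and_attains_min {N : ℕ} (hN : 2 ≤ N) :
    (∃ c : ℝ, ∀ P : Fin N → ℝ, Function.Injective P → c ≤ feketeH N P) ∧
    (∃ Pstar : Fin N → ℝ, Function.Injective Pstar ∧
      ∀ P : Fin N → ℝ, Function.Injective P → feketeH N Pstar ≤ feketeH N P) := by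
  classical
  have hn : (2:ℝ) ≤ (N:ℝ) := by exact_mod_cast hN
  have hd : 0 < (N:ℝ) * ((N:ℝ) - 1) := feketeAux_hden hN
  set c : ℝ := 2 / ((N:ℝ) * ((N:ℝ) - 1)) with hc_def
  have hc : 0 < c := by rw [hc_def]; positivity
  -- the reference configuration
  set Q : Fin N → ℝ := fun i => (i.val : ℝ) with hQdef
  have hQsep : ∀ i j : Fin N, i ≠ j → (1:ℝ) ≤ |Q i - Q j| := by
    intro i j hij
    have h : ((i.val : ℤ)) ≠ ((j.val : ℤ)) := by
      intro h; exact hij (Fin.ext (by exact_mod_cast h))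
    have h1 : (1:ℤ) ≤ |(i.val:ℤ) - (j.val:ℤ)| := Int.one_le_abs (sub_ne_zero.mpr h)
    have h2 : ((1:ℤ):ℝ) ≤ ((|(i.val:ℤ) - (j.val:ℤ)|:ℤ):ℝ) := by exact_mod_cast h1
    rw [Int.cast_abs] at h2
    push_cast at h2
    simpa [hQdef] using h2
  have hQinj : Function.Injective Q := by
    intro i j h
    simp only [hQdef] at h
    exact Fin.ext (by exact_mod_cast h)
  set h0 : ℝ := feketeH N Q with hh0
  -- the separation parameter δ
  set t : ℝ := (|h0| + 6) * ((N:ℝ) * ((N:ℝ) - 1)) / 2 with ht_def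
  have ht : 0 ≤ t := by rw [ht_def]; positivity
  set δ : ℝ := Real.exp (-t) with hδ_def
  have hδ0 : 0 < δ := Real.exp_pos _
  have hδ1 : δ ≤ 1 := Real.exp_le_one_iff.mpr (by linarith)
  have hlog : Real.log δ⁻¹ = t := by
    rw [Real.log_inv, hδ_def, Real.log_exp]; ring
  have hct : c * t = |h0| + 6 := by
    rw [hc_def, ht_def]; field_simp [show (N:ℝ) - 1 ≠ 0 by linarith]
  -- the radius r
  set r : ℝ := max (N:ℝ) (Real.sqrt (2*(N:ℝ)*(|h0| + 7))) with hr_def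
  have hr0 : (0:ℝ) ≤ r := le_trans (by linarith) (le_max_left _ _)
  have hrN : (N:ℝ) ≤ r := le_max_left _ _
  have hr2 : 2*(N:ℝ)*(|h0| + 7) ≤ r^2 := by
    have hnn : (0:ℝ) ≤ 2*(N:ℝ)*(|h0| + 7) := by positivity
    have h1 : Real.sqrt (2*(N:ℝ)*(|h0| + 7)) ≤ r := le_max_right _ _
    have h2 := Real.sq_sqrt hnn
    nlinarith [Real.sqrt_nonneg (2*(N:ℝ)*(|h0| + 7))]
  -- the compact set K
  set C : Set (Fin N → ℝ) := {P | ∀ i j : Fin N, i ≠ j → δ ≤ |P i - P j|} with hC_def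
  have hCclosed : IsClosed C := by
    have : C = ⋂ i : Fin N, ⋂ j : Fin N, {P : Fin N → ℝ | i ≠ j → δ ≤ |P i - P j|} := by
      ext P; simp [hC_def, Set.mem_iInter]
    rw [this]
    refine isClosed_iInter fun i => isClosed_iInter fun j => ?_
    by_cases h : i = j
    · subst h
      have : {P : Fin N → ℝ | i ≠ i → δ ≤ |P i - P i|} = Set.univ := by
        ext P; simp
      rw [this]; exact isClosed_univ
    · have : {P : Fin N → ℝ | i ≠ j → δ ≤ |P i - P j|} = {P : Fin N → ℝ | δ ≤ |P i - P j|} := by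
        ext P; simp [h]
      rw [this]
      exact isClosed_le continuous_const (((continuous_apply i).sub (continuous_apply j)).abs)
  set K : Set (Fin N → ℝ) := Metric.closedBall 0 r ∩ C with hK_def
  have hKcompact : IsCompact K := (isCompact_closedBall _ _).inter_right hCclosed
  have hQK : Q ∈ K := by
    constructor
    · rw [mem_closedBall_zero_iff]
      rw [pi_norm_le_iff_of_nonneg hr0]
      intro i
      have h1 : (i.val : ℝ) < (N:ℝ) := by exact_mod_cast i.isLt
      have h2 : ‖Q i‖ = (i.val : ℝ) := by
        simp only [hQdef, Real.norm_eq_abs]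
        exact abs_of_nonneg (by positivity)
      rw [h2]; linarith
    · intro i j hij
      exact le_trans hδ1 (hQsep i j hij)
  have hKU : K ⊆ {P : Fin N → ℝ | ∀ i j : Fin N, i ≠ j → P i ≠ P j} := by
    intro P hP i j hij
    have := hP.2 i j hij
    intro heq
    rw [heq] at this
    simp at this
    linarith
  obtain ⟨Pstar, hPstarK, hmin⟩ :=
    hKcompact.exists_isMinOn ⟨Q, hQK⟩ ((feketeAux_contOn N).mono hKU)
  have hPstarinj : Function.Injective Pstar := by
    intro i j h
    by_contra hij
    have := hPstarK.2 i j hij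
    rw [h] at this
    simp at this
    linarith
  constructor
  · refine ⟨-6, fun P _ => ?_⟩
    have h1 := feketeAux_ge hN P
    have h2 : 0 ≤ (1/(2*(N:ℝ))) * ∑ i, P i ^ 2 := by positivity
    linarith
  · refine ⟨Pstar, hPstarinj, fun P hPinj => ?_⟩
    by_cases hK : P ∈ K
    · exact isMinOn_iff.mp hmin P hK
    · have hstar_le_Q : feketeH N Pstar ≤ h0 := isMinOn_iff.mp hmin Q hQK
      have habs : h0 ≤ |h0| := le_abs_self h0
      suffices h : h0 ≤ feketeH N P by linarith
      rw [hK_def, Set.mem_inter_iff] at hK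
      rcases not_and_or.mp hK with hK1 | hK2
      · -- some coordinate is large
        rw [mem_closedBall_zero_iff, pi_norm_le_iff_of_nonneg hr0] at hK1
        push_neg at hK1
        obtain ⟨i, hi⟩ := hK1
        have h1 : r^2 ≤ P i ^ 2 := by
          have : r ≤ |P i| := le_of_lt (by simpa [Real.norm_eq_abs] using hi)
          nlinarith [sq_abs (P i), abs_nonneg (P i)]
        have h2 : P i ^ 2 ≤ ∑ k, P k ^ 2 :=
          Finset.single_le_sum (fun k _ => sq_nonneg (P k)) (Finset.mem_univ i)
        have h3 := feketeAux_ge hN P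
        have h4 : (1/(2*(N:ℝ))) * (2*(N:ℝ)*(|h0| + 7)) ≤ (1/(2*(N:ℝ))) * ∑ k, P k ^ 2 := by
          apply mul_le_mul_of_nonneg_left _ (by positivity)
          linarith
        have h5 : (1/(2*(N:ℝ))) * (2*(N:ℝ)*(|h0| + 7)) = |h0| + 7 := by
          field_simp
        linarith
      · -- some pair is δ-close
        have hK2' : ¬ ∀ i j : Fin N, i ≠ j → δ ≤ |P i - P j| := hK2
        push_neg at hK2'
        obtain ⟨i, j, hij, hlt⟩ := hK2'
        have hne : P i ≠ P j := fun h => hij (hPinj h)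
        have h1 := feketeAux_ge_close hN P hij hδ0 hne (le_of_lt hlt)
        rw [hlog] at h1
        rw [← hc_def] at h1
        linarith
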